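/- Let ξ be a core graph of genus 1 (i.e. the underlying graph is a tree) of type (1, n, r) with r > 0. Then ρ(A_ξ) ≤ n − r, where ρ(A_ξ) is the maximal number of rows of a Young diagram indexing an irreducible summand of the S_n-module A_ξ = Ind_{I_γ}^{S_n}(det(γ)_{Aut(γ)}) for any leg-labeling γ of ξ. Consequently n + ρ(A_ξ) ≤ 3(n − r). -/

import Mathlib

/-- A finite graph with a marking, following Payne–Willwacher: a finite nonempty set
of vertices `V`, a finite set of flags (half-edges) `F`, an adjacency map `a`, an
involution `ι` (whose 2-element orbits are edges and whose fixed points are legs),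
together with a distinguished vertex `dv` and a set `marked ⊆ a⁻¹(dv)` of marked
flags. -/
structure MGraph where
  V : Type
  F : Type
  [fintypeV : Fintype V]
  [fintypeF : Fintype F]
  [decV : DecidableEq V]
  [decF : DecidableEq F]
  nonemptyV : Nonempty V
  a : F → V
  ι : F → F
  ι_invol : ∀ f, ι (ι f) = f
  dv : V
  marked : Finset F
  marked_adj : ∀ f ∈ marked, a f = dv

namespace MGraph

attribute [instance] fintypeV fintypeF decV decF

variable (G : MGraph)

/-- The number of legs (fixed flags). -/
noncomputable def numLegs : ℕ := Fintype.card {f : G.F // G.ι f = f}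

/-- The number of edges (2-element orbits of the involution). -/
noncomputable def numEdges : ℕ := Fintype.card {f : G.F // G.ι f ≠ f} / 2

/-- Two vertices are adjacent if some edge joins them. -/
def Adj (v w : G.V) : Prop := ∃ f, G.ι f ≠ f ∧ G.a f = v ∧ G.a (G.ι f) = w

/-- The graph is connected. -/
def Connected : Prop := ∀ v w : G.V, Relation.ReflTransGen G.Adj v w

/-- Admissibility of the marking: stability (neutral vertices have valence ≥ 3),
no neutral tadpoles, and no doubly-marked edges. -/
def Admissible : Prop :=
  (∀ w : G.V, w ≠ G.dv → 3 ≤ Fintype.card {f : G.F // G.a f = w}) ∧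
  (∀ f : G.F, G.ι f ≠ f → G.a f = G.a (G.ι f) → G.a f = G.dv) ∧
  (∀ f ∈ G.marked, G.ι f ∈ G.marked → G.ι f = f)

/-- A core graph has no marked legs. -/
def NoMarkedLegs : Prop := ∀ f ∈ G.marked, G.ι f ≠ f

/-- The graph is of type `(g, n, r)`: first Betti number `g − 1`
(i.e. `|E| − |V| + 1 = g − 1`, written additively), `n` legs and `r` marked flags. -/
def IsType (g n r : ℕ) : Prop :=
  G.numEdges + 2 = Fintype.card G.V + g ∧ G.numLegs = n ∧ G.marked.card = r

end MGraph

namespace MGraph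

variable (G : MGraph)

section Iso

variable {n : ℕ}

/-- A (label-preserving) isomorphism between two leg labelings of a marked graph,
given by compatible permutations of the vertices and the flags. -/
structure IsIso (lab lab' : Fin n ≃ {f : G.F // G.ι f = f})
    (eV : Equiv.Perm G.V) (eF : Equiv.Perm G.F) : Prop where
  comm_a : ∀ f, G.a (eF f) = eV (G.a f)
  comm_ι : ∀ f, G.ι (eF f) = eF (G.ι f)
  fix_dv : eV G.dv = G.dv
  mem_marked : ∀ f, f ∈ G.marked ↔ eF f ∈ G.marked
  lab_eq : ∀ i : Fin n, eF (lab i : G.F) = (lab' i : G.F)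

/-- The marked graph `σγ`: the leg labeled `i` in `γ` is labeled `σ i` in `σγ`. -/
def relabel (σ : Equiv.Perm (Fin n)) (lab : Fin n ≃ {f : G.F // G.ι f = f}) :
    Fin n ≃ {f : G.F // G.ι f = f} :=
  σ.symm.trans lab

/-- The set `I_γ ⊆ Sₙ` of permutations `σ` with `σγ ≅ γ` by a label-preserving
isomorphism. -/
def ISet (lab : Fin n ≃ {f : G.F // G.ι f = f}) : Set (Equiv.Perm (Fin n)) :=
  {σ | ∃ eV eF, G.IsIso (G.relabel σ lab) lab eV eF}

end Iso

section Det

/-- The non-leg flags. -/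
abbrev NonLegs : Type := {f : G.F // G.ι f ≠ f}

/-- The relation identifying the two flags of an edge. -/
def edgeRel (f g : G.NonLegs) : Prop := (g : G.F) = f ∨ (g : G.F) = G.ι f

instance : DecidableRel G.edgeRel := by
  unfold edgeRel; infer_instance

/-- The setoid on non-leg flags whose classes are the edges. -/
def edgeSetoid : Setoid G.NonLegs where
  r := G.edgeRel
  iseqv := by
    constructor
    · intro f; exact Or.inl rfl
    · intro f g h
      rcases h with h | h
      · exact Or.inl h.symm
      · refine Or.inr ?_
        rw [h, G.ι_invol]
    · intro f g k hfg hgk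
      rcases hfg with h1 | h1 <;> rcases hgk with h2 | h2
      · exact Or.inl (h2.trans h1)
      · exact Or.inr (by rw [h2, h1])
      · exact Or.inr (h2.trans h1)
      · exact Or.inl (by rw [h2, h1, G.ι_invol])

/-- The set of edges of the graph. -/
abbrev Edge : Type := Quotient G.edgeSetoid

noncomputable instance : DecidableEq G.Edge := Classical.decEq _

noncomputable instance : Fintype G.Edge := Fintype.ofFinite _

variable {G}

/-- A structure-preserving flag permutation induces a permutation of the non-leg
flags. -/
def nonLegEquiv (eF : Equiv.Perm G.F) (hι : ∀ f, G.ι (eF f) = eF (G.ι f)) :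
    G.NonLegs ≃ G.NonLegs :=
  Equiv.subtypeEquiv eF (by
    intro f
    constructor
    · intro h hc
      rw [hι] at hc
      exact h (eF.injective hc)
    · intro h hc
      exact h (by rw [hι, hc]))

/-- The induced permutation of the edges. -/
def edgePerm (eF : Equiv.Perm G.F) (hι : ∀ f, G.ι (eF f) = eF (G.ι f)) :
    Equiv.Perm G.Edge :=
  Quotient.congr (nonLegEquiv eF hι) (by
    intro a b
    unfold edgeSetoid edgeRel
    show _ ↔ ((_ : G.F) = _ ∨ _)
    constructor
    · intro h
      rcases h with h | h
      · exact Or.inl (congrArg eF h)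
      · refine Or.inr ?_
        show eF (b : G.F) = G.ι (eF (a : G.F))
        rw [hι, h]
    · intro h
      rcases h with h | h
      · exact Or.inl (eF.injective h)
      · refine Or.inr ?_
        have : eF (b : G.F) = eF (G.ι (a : G.F)) := by rw [← hι]; exact h
        exact eF.injective this)

/-- The induced permutation of the marked flags. -/
def markedPerm (eF : Equiv.Perm G.F)
    (hm : ∀ f, f ∈ G.marked ↔ eF f ∈ G.marked) :
    Equiv.Perm {f : G.F // f ∈ G.marked} :=
  Equiv.subtypeEquiv eF hm

/-- The character by which a structure-preserving flag permutation acts on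
`det(γ) = det(E) ⊗ det⁻¹(D)`: the product of the signs of the induced permutations
of the edges and of the marked flags. -/
noncomputable def chi (eF : Equiv.Perm G.F)
    (hι : ∀ f, G.ι (eF f) = eF (G.ι f))
    (hm : ∀ f, f ∈ G.marked ↔ eF f ∈ G.marked) : ℤˣ :=
  Equiv.Perm.sign (edgePerm eF hι) * Equiv.Perm.sign (markedPerm eF hm)

variable (G)

/-- The submodule of `det(γ) ≅ ℚ` spanned by the elements `x − φ·x` for
automorphisms `φ` of the labeled marked graph. -/
noncomputable def coinvKer {n : ℕ} (lab : Fin n ≃ {f : G.F // G.ι f = f}) :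
    Submodule ℚ ℚ :=
  Submodule.span ℚ {y : ℚ | ∃ (eV : Equiv.Perm G.V) (eF : Equiv.Perm G.F)
    (h : G.IsIso lab lab eV eF) (x : ℚ),
    y = x - ((chi eF h.comm_ι h.mem_marked : ℤ) : ℚ) * x}

/-- The coinvariant space `det(γ)_{Aut(γ)}` (with `det(γ)` trivialized to `ℚ`). -/
noncomputable abbrev detCoinv {n : ℕ} (lab : Fin n ≃ {f : G.F // G.ι f = f}) : Type :=
  ℚ ⧸ G.coinvKer lab

/-- The projection `det(γ) → det(γ)_{Aut(γ)}`. -/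
noncomputable def detCoinvMk {n : ℕ} (lab : Fin n ≃ {f : G.F // G.ι f = f}) :
    ℚ →ₗ[ℚ] G.detCoinv lab :=
  (G.coinvKer lab).mkQ

/-- The pinning property of the canonical `I_γ`-action on `det(γ)_{Aut(γ)}`:
`σ ∈ I_γ` acts by first identifying `det(γ) = det(σγ)` and then applying (the
determinant character of) any label-preserving isomorphism `σγ → γ`, passed to
`Aut(γ)`-coinvariants. -/
def CanonicalCoinvRep {n : ℕ} (lab : Fin n ≃ {f : G.F // G.ι f = f})
    (H : Subgroup (Equiv.Perm (Fin n)))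
    (θ : Representation ℚ H (G.detCoinv lab)) : Prop :=
  ∀ (σ : Equiv.Perm (Fin n)) (hσ : σ ∈ H)
    (eV : Equiv.Perm G.V) (eF : Equiv.Perm G.F)
    (h : G.IsIso (G.relabel σ lab) lab eV eF) (x : ℚ),
    θ ⟨σ, hσ⟩ (G.detCoinvMk lab x) =
      G.detCoinvMk lab (((chi eF h.comm_ι h.mem_marked : ℤ) : ℚ) * x)

end Det

end MGraph

/-- `ρ(W)` for a representation `W` of `Sₙ`: the maximal `k` such that the
restriction of `W` to `S_k` contains the sign representation; equivalently, the
maximal number of rows of a Young diagram indexing an irreducible summand of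
`W`. -/
noncomputable def rhoRep {n : ℕ} {V : Type} [AddCommGroup V] [Module ℚ V]
    (ρ : Representation ℚ (Equiv.Perm (Fin n)) V) : ℕ :=
  sSup {k | ∃ h : k ≤ n, ∃ v : V, v ≠ 0 ∧ ∀ σ : Equiv.Perm (Fin k),
    ρ (Equiv.Perm.viaEmbeddingHom (Fin.castLEEmb h) σ) v =
      ((Equiv.Perm.sign σ : ℤ) : ℚ) • v}

section Induced

variable {G : Type} [Group G]

/-- The induced representation `Ind_H^G(V)`, modelled as the space of functions
`f : G → V` with `f (h * g) = ρ h (f g)` for `h ∈ H`, with `G` acting by right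
translation.  For finite groups this is the usual induced representation. -/
def indCarrier (H : Subgroup G) {V : Type} [AddCommGroup V] [Module ℚ V]
    (ρ : Representation ℚ H V) : Submodule ℚ (G → V) where
  carrier := {f | ∀ (h : H) (g : G), f ((h : G) * g) = ρ h (f g)}
  add_mem' := by intro x y hx hy h g; simp [hx h g, hy h g]
  zero_mem' := by intro h g; simp
  smul_mem' := by intro c x hx h g; simp [hx h g]

/-- The `G`-action on the induced representation, by right translation. -/
def indRep (H : Subgroup G) {V : Type} [AddCommGroup V] [Module ℚ V]
    (ρ : Representation ℚ H V) : Representation ℚ G (indCarrier H ρ) where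
  toFun σ :=
    { toFun := fun f => ⟨fun g => (f : G → V) (g * σ), by
        intro h g
        have := f.2 h (g * σ)
        simpa [mul_assoc] using this⟩
      map_add' := by intro f₁ f₂; ext g; simp
      map_smul' := by intro c f; ext g; simp }
  map_one' := by ext f g; simp
  map_mul' := by intro σ τ; ext f g; simp [mul_assoc]

/-- Equivariance of a linear map with respect to two representations of `G`. -/
def IsEquivariant {V W : Type} [AddCommGroup V] [Module ℚ V]
    [AddCommGroup W] [Module ℚ W]
    (ρ : Representation ℚ G V) (τ : Representation ℚ G W) (f : V →ₗ[ℚ] W) : Prop :=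
  ∀ (g : G) (v : V), f (ρ g v) = τ g (f v)

end Induced

set_option maxHeartbeats 1000000

open MGraph

section PWAux

open Finset

lemma pw_viaEmbeddingHom_swap {α β : Type*} [DecidableEq α] [DecidableEq β]
    (emb : α ↪ β) (x y : α) :
    Equiv.Perm.viaEmbeddingHom emb (Equiv.swap x y) = Equiv.swap (emb x) (emb y) := by
  ext z
  rw [Equiv.Perm.viaEmbeddingHom_apply]
  by_cases hz : z ∈ Set.range emb
  · obtain ⟨w, rfl⟩ := hz
    rw [Equiv.Perm.viaEmbedding_apply]
    rcases eq_or_ne w x with rfl | hwx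
    · rw [Equiv.swap_apply_left, Equiv.swap_apply_left]
    rcases eq_or_ne w y with rfl | hwy
    · rw [Equiv.swap_apply_right, Equiv.swap_apply_right]
    · rw [Equiv.swap_apply_of_ne_of_ne hwx hwy,
        Equiv.swap_apply_of_ne_of_ne (fun h => hwx (emb.injective h))
          (fun h => hwy (emb.injective h))]
  · rw [Equiv.Perm.viaEmbedding_apply_of_notMem _ _ z hz,
      Equiv.swap_apply_of_ne_of_ne (fun h => hz ⟨x, h.symm⟩) (fun h => hz ⟨y, h.symm⟩)]

lemma pw_even_card_nonlegs (G : MGraph) :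
    Even (Fintype.card {f : G.F // G.ι f ≠ f}) := by
  classical
  let f : Function.End {f : G.F // G.ι f ≠ f} := fun x =>
    ⟨G.ι x.1, by
      intro hc
      rw [G.ι_invol] at hc
      exact x.2 hc.symm⟩
  have hf : f ^ 2 ^ 1 = 1 := by
    have h2 : f ^ 2 ^ 1 = f * f := by norm_num [pow_two]
    rw [h2]
    funext x
    exact Subtype.ext (G.ι_invol x.1)
  have h := Equiv.Perm.card_fixedPoints_modEq (p := 2) (n := 1) hf
  have hfp : Fintype.card (Function.fixedPoints f) = 0 := by
    rw [Fintype.card_eq_zero_iff]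
    constructor
    intro x
    have hx : f x = x := x.2
    have : G.ι x.1.1 = x.1.1 := congrArg Subtype.val hx
    exact x.1.2 this
  rw [hfp] at h
  exact (Nat.modEq_zero_iff_dvd.mp h).elim (fun t ht => ⟨t, by omega⟩)

lemma pw_card_not_lt (n k : ℕ) (hk : k ≤ n) :
    Fintype.card {x : Fin n // ¬ (x : ℕ) < k} = n - k := by
  classical
  have e : {x : Fin n // (x : ℕ) < k} ≃ Fin k :=
    ⟨fun x => ⟨(x : Fin n), x.2⟩, fun j => ⟨⟨j.1, j.2.trans_le hk⟩, j.2⟩,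
      fun x => rfl, fun j => rfl⟩
  have h1 : Fintype.card {x : Fin n // (x : ℕ) < k} = k :=
    (Fintype.card_congr e).trans (Fintype.card_fin k)
  rw [Fintype.card_subtype_compl, h1, Fintype.card_fin]

lemma pw_exists_leg_pairs (G : MGraph) (n r : ℕ) (hr : 0 < r)
    (lab : Fin n ≃ {f : G.F // G.ι f = f})
    (hconn : G.Connected) (hadm : G.Admissible) (hcore : G.NoMarkedLegs)
    (htype : G.IsType 1 n r) :
    ∃ P Q : Fin r → Fin n,
      (∀ i, G.a (lab (P i)) = G.a (lab (Q i))) ∧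
      Function.Injective (fun x : Fin r × Bool => if x.2 then P x.1 else Q x.1) := by
  classical
  set dE : G.V → ℕ := fun v => (univ.filter fun f : G.F => G.ι f ≠ f ∧ G.a f = v).card
    with hdE
  set m : ℕ := (univ.filter fun f : G.F => G.ι f ≠ f).card with hmdef
  -- m is even
  have hm_card : m = Fintype.card {f : G.F // G.ι f ≠ f} :=
    (Fintype.card_subtype _).symm
  have hme : Even m := by rw [hm_card]; exact pw_even_card_nonlegs G
  obtain ⟨t, ht⟩ := hme
  -- numEdges relation
  have hnE : G.numEdges = t := by
    unfold MGraph.numEdges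
    rw [← hm_card, ht]
    omega
  have htV : t + 1 = Fintype.card G.V := by
    have := htype.1
    rw [hnE] at this
    omega
  -- sum of edge-degrees
  have hsum : ∑ v : G.V, dE v = m := by
    rw [hmdef, Finset.card_eq_sum_card_fiberwise
      (f := G.a) (t := univ) (fun x _ => mem_univ _)]
    apply Finset.sum_congr rfl
    intro v _
    rw [hdE, Finset.filter_filter]
  -- marked flags bound the edge degree of dv
  have hdv : r ≤ dE G.dv := by
    rw [← htype.2.2]
    apply Finset.card_le_card
    intro f hf
    exact mem_filter.mpr ⟨mem_univ _, hcore f hf, G.marked_adj f hf⟩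
  -- every non-distinguished vertex has an adjacent edge
  have hdeg : ∀ v : G.V, v ≠ G.dv → 1 ≤ dE v := by
    intro v hv
    rcases (Relation.ReflTransGen.cases_head (hconn v G.dv)) with h | ⟨c, hadj, _⟩
    · exact absurd h hv
    · obtain ⟨f, hf1, hf2, _⟩ := hadj
      exact Finset.card_pos.mpr ⟨f, mem_filter.mpr ⟨mem_univ _, hf1, hf2⟩⟩
  set N : Finset G.V := univ.erase G.dv with hN
  set leaves : Finset G.V := N.filter (fun v => dE v = 1) with hleavesdef
  -- count leaves
  have hleaves : r ≤ leaves.card := by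
    have h1 : dE G.dv + ∑ v ∈ N, dE v = ∑ v : G.V, dE v :=
      Finset.add_sum_erase _ _ (mem_univ _)
    have h2 : ∑ v ∈ leaves, dE v + ∑ v ∈ N.filter (fun v => ¬ dE v = 1), dE v
        = ∑ v ∈ N, dE v := Finset.sum_filter_add_sum_filter_not N _ dE
    have h3 : ∑ v ∈ leaves, dE v = leaves.card := by
      rw [Finset.sum_congr rfl (fun v hv => (Finset.mem_filter.mp hv).2)]
      simp
      rfl
    have h4 : (N.filter (fun v => ¬ dE v = 1)).card * 2
        ≤ ∑ v ∈ N.filter (fun v => ¬ dE v = 1), dE v := by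
      have := Finset.card_nsmul_le_sum (N.filter (fun v => ¬ dE v = 1)) dE 2
        (fun v hv => by
          have hv1 := (mem_filter.mp hv).2
          have hv2 := hdeg v (Finset.ne_of_mem_erase (mem_filter.mp hv).1)
          omega)
      simpa [smul_eq_mul, mul_comm] using this
    have h5 : leaves.card + (N.filter (fun v => ¬ dE v = 1)).card = N.card :=
      Finset.card_filter_add_card_filter_not _
    have h6 : N.card = Fintype.card G.V - 1 := by
      rw [hN, Finset.card_erase_of_mem (mem_univ _), Finset.card_univ]
    omega
  -- each leaf has at least two legs
  have hlegs : ∀ v ∈ leaves, ∃ a b : G.F, a ≠ b ∧ (G.ι a = a ∧ G.a a = v) ∧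
      (G.ι b = b ∧ G.a b = v) := by
    intro v hv
    have hvdv : v ≠ G.dv := Finset.ne_of_mem_erase (mem_filter.mp hv).1
    have hv1 : dE v = 1 := (mem_filter.mp hv).2
    have h3 : 3 ≤ (univ.filter fun f : G.F => G.a f = v).card := by
      have := hadm.1 v hvdv
      rwa [Fintype.card_subtype] at this
    have hsplit : ((univ.filter fun f : G.F => G.a f = v).filter
          (fun f => G.ι f ≠ f)).card +
        ((univ.filter fun f : G.F => G.a f = v).filter
          (fun f => ¬ G.ι f ≠ f)).card
        = (univ.filter fun f : G.F => G.a f = v).card :=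
      Finset.card_filter_add_card_filter_not _
    have heq1 : (univ.filter fun f : G.F => G.a f = v).filter (fun f => G.ι f ≠ f)
        = univ.filter fun f : G.F => G.ι f ≠ f ∧ G.a f = v := by
      rw [Finset.filter_filter]
      apply Finset.filter_congr
      intro f _
      tauto
    have h2legs : 2 ≤ ((univ.filter fun f : G.F => G.a f = v).filter
        (fun f => ¬ G.ι f ≠ f)).card := by
      rw [heq1] at hsplit
      have hbridge : (univ.filter fun f : G.F => G.ι f ≠ f ∧ G.a f = v).card = dE v := rfl
      omega
    obtain ⟨a, ha, b, hb, hab⟩ := Finset.one_lt_card.mp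
      (show 1 < ((univ.filter fun f : G.F => G.a f = v).filter
        (fun f => ¬ G.ι f ≠ f)).card by omega)
    have ha' := mem_filter.mp ha
    have hb' := mem_filter.mp hb
    have ha'' := mem_filter.mp ha'.1
    have hb'' := mem_filter.mp hb'.1
    exact ⟨a, b, hab, ⟨not_not.mp ha'.2, ha''.2⟩, ⟨not_not.mp hb'.2, hb''.2⟩⟩
  -- pick r distinct leaves
  let ph : Fin r → G.V := fun i => (leaves.equivFin.symm (Fin.castLE hleaves i) : G.V)
  have hph_mem : ∀ i, ph i ∈ leaves := fun i => (leaves.equivFin.symm _).2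
  have hph_inj : Function.Injective ph := fun i j h =>
    Fin.castLE_injective _ (leaves.equivFin.symm.injective (Subtype.coe_injective h))
  have hpair : ∀ i : Fin r, ∃ a b : G.F, a ≠ b ∧ (G.ι a = a ∧ G.a a = ph i) ∧
      (G.ι b = b ∧ G.a b = ph i) := fun i => hlegs (ph i) (hph_mem i)
  choose A B hne hA hB using hpair
  have hA1 : ∀ i, G.ι (A i) = A i := fun i => (hA i).1
  have hA2 : ∀ i, G.a (A i) = ph i := fun i => (hA i).2
  have hB1 : ∀ i, G.ι (B i) = B i := fun i => (hB i).1
  have hB2 : ∀ i, G.a (B i) = ph i := fun i => (hB i).2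
  refine ⟨fun i => lab.symm ⟨A i, hA1 i⟩, fun i => lab.symm ⟨B i, hB1 i⟩, ?_, ?_⟩
  · intro i
    simp only [Equiv.apply_symm_apply]
    rw [hA2 i, hB2 i]
  · intro x y hxy
    have key : ∀ (u w : G.F), G.a u = ph x.1 → G.a w = ph y.1 → u = w → x.1 = y.1 := by
      intro u w hu hw huw
      apply hph_inj
      rw [← hu, ← hw, huw]
    rcases x with ⟨i, bi⟩
    rcases y with ⟨j, bj⟩
    dsimp only at hxy
    cases bi <;> cases bj <;> simp only [Bool.false_eq_true, if_false, if_true,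
      ite_true, ite_false, reduceIte] at hxy
    · -- Q i = Q j
      have hval : B i = B j := congrArg Subtype.val (lab.symm.injective hxy)
      have hij : i = j := key _ _ (hA2 i ▸ hB2 i) (hB2 j) hval
      subst hij; rfl
    · -- Q i = P j
      have hval : B i = A j := congrArg Subtype.val (lab.symm.injective hxy)
      have hij : i = j := key _ _ (hB2 i) (hA2 j) hval
      subst hij
      exact absurd (hval.symm) (hne i)
    · -- P i = Q j
      have hval : A i = B j := congrArg Subtype.val (lab.symm.injective hxy)
      have hij : i = j := key _ _ (hA2 i) (hB2 j) hval
      subst hij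
      exact absurd hval (hne i)
    · -- P i = P j
      have hval : A i = A j := congrArg Subtype.val (lab.symm.injective hxy)
      have hij : i = j := key _ _ (hA2 i) (hA2 j) hval
      subst hij; rfl

lemma pw_theta_swap (G : MGraph) {n : ℕ} (lab : Fin n ≃ {f : G.F // G.ι f = f})
    (hcore : G.NoMarkedLegs)
    (H : Subgroup (Equiv.Perm (Fin n))) (hH : (H : Set (Equiv.Perm (Fin n))) = G.ISet lab)
    (θ : Representation ℚ H (G.detCoinv lab)) (hθ : G.CanonicalCoinvRep lab H θ)
    (a b : Fin n) (hab : a ≠ b) (hv : G.a (lab a) = G.a (lab b)) :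
    ∃ hmem : Equiv.swap a b ∈ H,
      ∀ w : G.detCoinv lab, θ ⟨Equiv.swap a b, hmem⟩ w = w := by
  classical
  set fa : G.F := (lab a : G.F) with hfa
  set fb : G.F := (lab b : G.F) with hfb
  have hfafix : G.ι fa = fa := (lab a).2
  have hfbfix : G.ι fb = fb := (lab b).2
  have hfab : fa ≠ fb := fun h => hab (lab.injective (Subtype.ext h))
  set eF : Equiv.Perm G.F := Equiv.swap fa fb with heF
  have hfix : ∀ f : G.F, G.ι f ≠ f → eF f = f := by
    intro f hf
    apply Equiv.swap_apply_of_ne_of_ne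
    · intro h; exact hf (h ▸ hfafix)
    · intro h; exact hf (h ▸ hfbfix)
  have hcomm_ι : ∀ f, G.ι (eF f) = eF (G.ι f) := by
    intro f
    rcases eq_or_ne f fa with rfl | h1
    · rw [Equiv.swap_apply_left, hfbfix, hfafix, Equiv.swap_apply_left]
    rcases eq_or_ne f fb with rfl | h2
    · rw [Equiv.swap_apply_right, hfafix, hfbfix, Equiv.swap_apply_right]
    · rw [Equiv.swap_apply_of_ne_of_ne h1 h2]
      rcases eq_or_ne (G.ι f) f with hlf | hlf
      · rw [hlf, Equiv.swap_apply_of_ne_of_ne h1 h2]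
      · rw [Equiv.swap_apply_of_ne_of_ne ?_ ?_]
        · intro h
          exact h1 (by rw [← G.ι_invol f, h, hfafix])
        · intro h
          exact h2 (by rw [← G.ι_invol f, h, hfbfix])
  have hnmark : fa ∉ G.marked ∧ fb ∉ G.marked := by
    constructor
    · intro h; exact hcore fa h hfafix
    · intro h; exact hcore fb h hfbfix
  have hmem_marked : ∀ f, f ∈ G.marked ↔ eF f ∈ G.marked := by
    intro f
    rcases eq_or_ne f fa with rfl | h1
    · rw [Equiv.swap_apply_left]
      exact ⟨fun h => absurd h hnmark.1, fun h => absurd h hnmark.2⟩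
    rcases eq_or_ne f fb with rfl | h2
    · rw [Equiv.swap_apply_right]
      exact ⟨fun h => absurd h hnmark.2, fun h => absurd h hnmark.1⟩
    · rw [Equiv.swap_apply_of_ne_of_ne h1 h2]
  have iso : G.IsIso (G.relabel (Equiv.swap a b) lab) lab 1 eF := by
    refine ⟨?_, hcomm_ι, rfl, hmem_marked, ?_⟩
    · intro f
      show G.a (eF f) = G.a f
      rcases eq_or_ne f fa with rfl | h1
      · rw [Equiv.swap_apply_left]; exact hv.symm
      rcases eq_or_ne f fb with rfl | h2
      · rw [Equiv.swap_apply_right]; exact hv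
      · rw [Equiv.swap_apply_of_ne_of_ne h1 h2]
    · intro i
      show eF ((lab ((Equiv.swap a b).symm i) : G.F)) = (lab i : G.F)
      rw [Equiv.symm_swap]
      rcases eq_or_ne i a with rfl | h1
      · rw [Equiv.swap_apply_left]
        show eF fb = fa
        rw [Equiv.swap_apply_right]
      rcases eq_or_ne i b with rfl | h2
      · rw [Equiv.swap_apply_right]
        show eF fa = fb
        rw [Equiv.swap_apply_left]
      · rw [Equiv.swap_apply_of_ne_of_ne h1 h2]
        apply Equiv.swap_apply_of_ne_of_ne
        · intro h; exact h1 (lab.injective (Subtype.ext h))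
        · intro h; exact h2 (lab.injective (Subtype.ext h))
  have hmem : Equiv.swap a b ∈ H := by
    have : Equiv.swap a b ∈ (H : Set (Equiv.Perm (Fin n))) := by
      rw [hH]
      exact ⟨1, eF, iso⟩
    exact this
  refine ⟨hmem, ?_⟩
  have hchi : MGraph.chi eF iso.comm_ι iso.mem_marked = 1 := by
    unfold MGraph.chi
    have h1 : MGraph.edgePerm eF iso.comm_ι = 1 := by
      apply Equiv.ext
      intro q
      refine Quotient.inductionOn q (fun x => ?_)
      show MGraph.edgePerm eF iso.comm_ι (Quotient.mk _ x) = Quotient.mk _ x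
      unfold MGraph.edgePerm
      rw [Quotient.congr_mk]
      congr 1
      exact Subtype.ext (hfix x.1 x.2)
    have h2 : MGraph.markedPerm eF iso.mem_marked = 1 := by
      apply Equiv.ext
      rintro ⟨f, hf⟩
      apply Subtype.ext
      show eF f = f
      exact hfix f (hcore f hf)
    rw [h1, h2]
    simp
  intro w
  obtain ⟨x, rfl⟩ := Submodule.mkQ_surjective (G.coinvKer lab) w
  have := hθ (Equiv.swap a b) hmem 1 eF iso x
  rw [hchi] at this
  simp only [Units.val_one, Int.cast_one, one_mul] at this
  exact this

end PWAux

/-- let `ξ` be a genus-1 core graph (a tree) of type `(1, n, r)` with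
`r > 0`, with a leg labeling `lab`.  Let `A_ξ = Ind_{I_γ}^{S_n}(det(γ)_{Aut(γ)})`,
where `I_γ` is the subgroup of `Sₙ` of permutations `σ` with `σγ ≅ γ` and the
action on the coinvariants is the canonical one.  Then `ρ(A_ξ) ≤ n − r`, and
consequently `n + ρ(A_ξ) ≤ 3(n − r)`. -/
theorem genus_one_core_graph_row_bound (G : MGraph) (n r : ℕ) (hr : 0 < r)
    (lab : Fin n ≃ {f : G.F // G.ι f = f})
    (hconn : G.Connected) (hadm : G.Admissible) (hcore : G.NoMarkedLegs)
    (htype : G.IsType 1 n r)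
    (H : Subgroup (Equiv.Perm (Fin n))) (hH : (H : Set (Equiv.Perm (Fin n))) = G.ISet lab)
    (θ : Representation ℚ H (G.detCoinv lab))
    (hθ : G.CanonicalCoinvRep lab H θ) :
    (rhoRep (indRep H θ) : ℤ) ≤ (n : ℤ) - (r : ℤ) ∧
    (n : ℤ) + (rhoRep (indRep H θ) : ℤ) ≤ 3 * ((n : ℤ) - (r : ℤ)) := by
  classical
  obtain ⟨P, Q, hPQv, hPQinj⟩ := pw_exists_leg_pairs G n r hr lab hconn hadm hcore htype
  have hPneQ : ∀ i : Fin r, P i ≠ Q i := by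
    intro i h
    have : ((i, true) : Fin r × Bool) = (i, false) := hPQinj (by
      show (if true then P i else Q i) = (if false then P i else Q i)
      simpa using h)
    simpa using congrArg Prod.snd this
  have hswap : ∀ i : Fin r, ∃ hmem : Equiv.swap (P i) (Q i) ∈ H,
      ∀ w : G.detCoinv lab, θ ⟨Equiv.swap (P i) (Q i), hmem⟩ w = w := fun i =>
    pw_theta_swap G lab hcore H hH θ hθ (P i) (Q i) (hPneQ i) (hPQv i)
  choose hmem hid using hswap
  -- 2r ≤ n
  have h2r : 2 * r ≤ n := by
    have := Fintype.card_le_of_injective _ hPQinj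
    simp only [Fintype.card_prod, Fintype.card_fin, Fintype.card_bool] at this
    omega
  -- main bound on rhoRep
  have hrho : rhoRep (indRep H θ) ≤ n - r := by
    apply csSup_le'
    rintro k ⟨hk, v, hv0, hsv⟩
    suffices hkr : k + r ≤ n by omega
    by_contra hcon
    apply hv0
    apply Subtype.ext
    funext g
    show (v : Equiv.Perm (Fin n) → G.detCoinv lab) g = 0
    -- pigeonhole: some pair lands entirely in the first k positions
    have hgood : ∃ i : Fin r, ((g⁻¹ (P i) : Fin n) : ℕ) < k ∧
        ((g⁻¹ (Q i) : Fin n) : ℕ) < k := by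
      by_contra hbad
      push_neg at hbad
      have hc : ∀ i : Fin r, ∃ x : Fin n, ¬ (x : ℕ) < k ∧
          (x = g⁻¹ (P i) ∨ x = g⁻¹ (Q i)) := by
        intro i
        by_cases h : ((g⁻¹ (P i) : Fin n) : ℕ) < k
        · exact ⟨g⁻¹ (Q i), by simpa using hbad i h, Or.inr rfl⟩
        · exact ⟨g⁻¹ (P i), h, Or.inl rfl⟩
      choose c hc1 hc2 using hc
      have key : ∀ (b1 b2 : Bool) (i j : Fin r),
          (if b1 then P i else Q i) = (if b2 then P j else Q j) → i = j := by
        intro b1 b2 i j hb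
        have := hPQinj (a₁ := (i, b1)) (a₂ := (j, b2)) hb
        exact congrArg Prod.fst this
      have hcinj : Function.Injective
          (fun i : Fin r => (⟨c i, hc1 i⟩ : {x : Fin n // ¬ (x : ℕ) < k})) := by
        intro i j hij
        have hval : c i = c j := congrArg Subtype.val hij
        rcases hc2 i with h1 | h1 <;> rcases hc2 j with h2 | h2
        · have h3 : P i = P j := g⁻¹.injective (by rw [← h1, ← h2]; exact hval)
          exact key true true i j (by simpa using h3)
        · have h3 : P i = Q j := g⁻¹.injective (by rw [← h1, ← h2]; exact hval)
          exact key true false i j (by simpa using h3)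
        · have h3 : Q i = P j := g⁻¹.injective (by rw [← h1, ← h2]; exact hval)
          exact key false true i j (by simpa using h3)
        · have h3 : Q i = Q j := g⁻¹.injective (by rw [← h1, ← h2]; exact hval)
          exact key false false i j (by simpa using h3)
      have hcard := Fintype.card_le_of_injective _ hcinj
      rw [pw_card_not_lt n k hk, Fintype.card_fin] at hcard
      omega
    obtain ⟨i, hu, hw⟩ := hgood
    set u : Fin k := ⟨((g⁻¹ (P i) : Fin n) : ℕ), hu⟩ with hudef
    set w : Fin k := ⟨((g⁻¹ (Q i) : Fin n) : ℕ), hw⟩ with hwdef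
    have huw : u ≠ w := by
      intro h
      apply hPneQ i
      apply g⁻¹.injective
      apply Fin.ext
      have h' : (u : ℕ) = (w : ℕ) := congrArg Fin.val h
      exact h'
    have hsσ := hsv (Equiv.swap u w)
    have hemb : Equiv.Perm.viaEmbeddingHom (Fin.castLEEmb hk) (Equiv.swap u w)
        = Equiv.swap (g⁻¹ (P i)) (g⁻¹ (Q i)) := by
      rw [pw_viaEmbeddingHom_swap]
      rw [show (Fin.castLEEmb hk) u = g⁻¹ (P i) from Fin.ext rfl,
        show (Fin.castLEEmb hk) w = g⁻¹ (Q i) from Fin.ext rfl]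
    rw [hemb] at hsσ
    have hsign : Equiv.Perm.sign (Equiv.swap u w) = -1 := Equiv.Perm.sign_swap huw
    rw [hsign] at hsσ
    have hconj : g * Equiv.swap (g⁻¹ (P i)) (g⁻¹ (Q i)) = Equiv.swap (P i) (Q i) * g := by
      have h := Equiv.swap_apply_apply g⁻¹ (P i) (Q i)
      rw [h]
      group
    have hcar := v.2 ⟨Equiv.swap (P i) (Q i), hmem i⟩ g
    have hidv := hid i ((v : Equiv.Perm (Fin n) → G.detCoinv lab) g)
    -- assemble : v g = - v g
    have e1 : (v : Equiv.Perm (Fin n) → G.detCoinv lab)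
        (Equiv.swap (P i) (Q i) * g)
        = (((-1 : ℤˣ) : ℤ) : ℚ) • (v : Equiv.Perm (Fin n) → G.detCoinv lab) g := by
      rw [← hconj]
      exact congrFun (congrArg Subtype.val hsσ) g
    have e2 : (v : Equiv.Perm (Fin n) → G.detCoinv lab) g
        = (((-1 : ℤˣ) : ℤ) : ℚ) • (v : Equiv.Perm (Fin n) → G.detCoinv lab) g :=
      hidv.symm.trans (hcar.symm.trans e1)
    rw [show (((-1 : ℤˣ) : ℤ) : ℚ) = -1 by norm_num, neg_one_smul] at e2
    have h2smul : (2 : ℚ) • ((v : Equiv.Perm (Fin n) → G.detCoinv lab) g) = 0 := by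
      rw [two_smul]
      nth_rewrite 1 [e2]
      exact neg_add_cancel _
    have h4 := congrArg (fun z => (2⁻¹ : ℚ) • z) h2smul
    simpa [smul_smul] using h4
  constructor <;> omega
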